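/- Let μ ≥ 2 be an even integer, W a positive integer, K = μW + 1, and ψ ∈ (0, 2π) a phase with (3/4 − ψ/(2π))·μ not an integer. Then the number of activated ports equals half of the usable ports: the cardinality of K₁(ψ) = {k ∈ {2, …, K} : cos(ψ + (2π/μ)(k−1)) > 0} is (K−1)/2 = μW/2. -/

import Mathlib

open Real Finset
open scoped Classical

lemma aux_pair (Q : ℕ → Prop) [DecidablePred Q] (h : ℕ)
    (hflip : ∀ j, Q (j + h) ↔ ¬ Q j) (a : ℕ) :
    ((Finset.Ico a (a + (h + h))).filter Q).card = h := by
  have h1 : Finset.Ico a (a + (h + h)) =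
      Finset.Ico a (a + h) ∪ Finset.Ico (a + h) (a + (h + h)) :=
    (Finset.Ico_union_Ico_eq_Ico (by omega) (by omega)).symm
  have h2 : Finset.Ico (a + h) (a + (h + h)) = (Finset.Ico a (a + h)).image (· + h) := by
    ext x; simp [Finset.mem_image]; omega
  have hdisj : Disjoint (Finset.Ico a (a + h)) (Finset.Ico (a + h) (a + (h + h))) :=
    Finset.Ico_disjoint_Ico_consecutive _ _ _
  rw [h1, Finset.filter_union,
    Finset.card_union_of_disjoint (Finset.disjoint_filter_filter hdisj), h2,
    Finset.filter_image,
    Finset.card_image_of_injective _ (add_left_injective h)]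
  have h3 : (Finset.Ico a (a + h)).filter (fun j => Q (j + h))
      = (Finset.Ico a (a + h)).filter (fun j => ¬ Q j) := by
    apply Finset.filter_congr; intro j _; simp [hflip j]
  rw [h3]
  have := Finset.card_filter_add_card_filter_not (s := Finset.Ico a (a + h)) (p := Q)
  simp only [Nat.card_Ico] at this ⊢
  omega

lemma aux_count (Q : ℕ → Prop) [DecidablePred Q] (h : ℕ)
    (hflip : ∀ j, Q (j + h) ↔ ¬ Q j) (a : ℕ) (n : ℕ) :
    ((Finset.Ico a (a + (h + h) * n)).filter Q).card = h * n := by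
  induction n with
  | zero => simp
  | succ n ih =>
      have e : a + (h + h) * (n + 1) = (a + (h + h) * n) + (h + h) := by ring
      have h1 : Finset.Ico a (a + (h + h) * (n + 1)) =
          Finset.Ico a (a + (h + h) * n) ∪
            Finset.Ico (a + (h + h) * n) ((a + (h + h) * n) + (h + h)) := by
        rw [e]; exact (Finset.Ico_union_Ico_eq_Ico (by omega) (by omega)).symm
      have hdisj : Disjoint (Finset.Ico a (a + (h + h) * n))
          (Finset.Ico (a + (h + h) * n) ((a + (h + h) * n) + (h + h))) :=
        Finset.Ico_disjoint_Ico_consecutive _ _ _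
      rw [h1, Finset.filter_union,
        Finset.card_union_of_disjoint (Finset.disjoint_filter_filter hdisj), ih,
        aux_pair Q h hflip]
      ring

/-- Lemma 3: the number of activated ports equals `(K-1)/2 = μW/2`. -/
theorem cuma_activated_ports_card (μ W : ℕ) (hμ2 : 2 ≤ μ) (hμe : Even μ) (hW : 1 ≤ W)
    (ψ : ℝ) (hψ0 : 0 < ψ) (hψ2 : ψ < 2 * π)
    (hni : ∀ n : ℤ, (3 / 4 - ψ / (2 * π)) * μ ≠ (n : ℝ)) :
    ((Finset.Icc 2 (μ * W + 1)).filter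
        (fun k => 0 < Real.cos (ψ + 2 * π / μ * ((k : ℝ) - 1)))).card
      = μ * W / 2 := by
  obtain ⟨h, rfl⟩ := hμe
  have hπ := Real.pi_pos
  have hh : 1 ≤ h := by omega
  have hu : ((h : ℝ) + h) ≠ 0 := by positivity
  set Q : ℕ → Prop := fun j => 0 < Real.cos (ψ + 2 * π / (↑(h + h)) * j) with hQ
  -- cos never zero at these points
  have hne : ∀ j : ℕ, Real.cos (ψ + 2 * π / (↑(h + h)) * j) ≠ 0 := by
    intro j hc
    rw [Real.cos_eq_zero_iff] at hc
    obtain ⟨m, hm⟩ := hc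
    apply hni ((1 - m) * h + j)
    push_cast at hm ⊢
    field_simp at hm ⊢
    nlinarith [hm]
  -- flip property
  have hflip : ∀ j, Q (j + h) ↔ ¬ Q j := by
    intro j
    have e : ψ + 2 * π / (↑(h + h)) * (↑(j + h)) = (ψ + 2 * π / (↑(h + h)) * j) + π := by
      push_cast
      field_simp
      ring
    simp only [hQ, e, Real.cos_add_pi]
    have := hne j
    constructor
    · intro h1 h2; linarith
    · intro h1; rcases lt_or_gt_of_ne this with h2 | h2 <;> [linarith; exact absurd h2 h1]
  simp only [bind_def, Finset.pure_def, Finset.sup_singleton_apply]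
  rw [Finset.filter_image, Finset.card_image_of_injective _ Nat.cast_injective]
  have himg : Finset.Icc 2 ((h + h) * W + 1) = (Finset.Ico 1 (1 + (h + h) * W)).image (· + 1) := by
    ext x; simp [Finset.mem_image]; omega
  rw [himg, Finset.filter_image, Finset.card_image_of_injective _ (add_left_injective 1)]
  have h4 : ∀ j ∈ Finset.Ico 1 (1 + (h + h) * W),
      (0 < Real.cos (ψ + 2 * π / (↑(h + h)) * (((j + 1 : ℕ) : ℝ) - 1)) ↔ Q j) := by
    intro j _
    have e : (((j + 1 : ℕ) : ℝ) - 1) = (j : ℝ) := by push_cast; ring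
    rw [e]
  rw [Finset.filter_congr h4, aux_count Q h hflip]
  have : (h + h) * W = 2 * (h * W) := by ring
  omega
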